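/- ADRC recovers model-based observer performance (Theorem 2): For all a1, a2, a3 ∈ ℝ, all b ∈ ℝ with b ≠ 0, and all k1*, k2*, k3*, g1*, g2*, g3*, g4* ∈ ℝ, there exist k1, k2, k3, g1, g2, g3, g4 ∈ ℝ such that, in the field of rational functions ℝ(s), (q̂3·s^3 + q̂2·s^2 + q̂1·s + q̂0) / (b·s·(s^3 + q̂6·s^2 + q̂5·s + q̂4)) = N(s) / D(s), where q̂6 = g1 + k3, q̂5 = g2 + k2 + g1·k3, q̂4 = g3 + k1 + g1·k2 + g2·k3, q̂3 = g4 + g1·k1 + g2·k2 + g3·k3, q̂2 = g2·k1 + g3·k2 + g4·k3, q̂1 = g3·k1 + g4·k2, q̂0 = g4·k1, and N(s) = (g4* + g1*·k1* + g2*·k2* + g3*·k3*)·s^3 + (g2*·k1* + g3*·k2* + g4*·k3* − a3·g4* − a3·g1*·k1* − a3·g2*·k2* + a1·g1*·k3* + a2·g2*·k3*)·s^2 + (g3*·k1* + g4*·k2* + a1·g1*·k2* − a2·g1*·k1* + a1·g2*·k3* − a3·g2*·k1* − a2·g4*)·s + g4*·(k1* − a1), and D(s) = b·s·(s^3 + (g1*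 + k3* − a3)·s^2 + (g2* + k2* + g1*·k3* − a3·g1* − a2)·s + (g3* + k1* + g1*·k2* + g2*·k3* − a2·g1* − a3·g2* − a1)). -/

import Mathlib

open RatFunc
open Polynomial



/-- Every monic real polynomial of positive degree has a monic factor of degree 1 or 2. -/
lemma exists_small_monic_factor (p : ℝ[X]) (hm : p.Monic) (hd : 1 ≤ p.natDegree) :
    ∃ f q : ℝ[X], f.Monic ∧ q.Monic ∧ (f.natDegree = 1 ∨ f.natDegree = 2) ∧ p = f * q := by
  have hp0 : p ≠ 0 := hm.ne_zero
  have hnu : ¬ IsUnit p := p.not_isUnit_of_natDegree_pos hd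
  obtain ⟨i, hi, hdvd⟩ := WfDvdMonoid.exists_irreducible_factor hnu hp0
  have hi0 : i ≠ 0 := hi.ne_zero
  have hlc : i.leadingCoeff ≠ 0 := leadingCoeff_ne_zero.mpr hi0
  set f : ℝ[X] := Polynomial.C i.leadingCoeff⁻¹ * i with hf
  have hfm : f.Monic := by
    unfold Polynomial.Monic
    rw [hf, leadingCoeff_mul, leadingCoeff_C, inv_mul_cancel₀ hlc]
  have hfi2 : i = f * Polynomial.C i.leadingCoeff := by
    rw [hf, mul_right_comm, ← C_mul, inv_mul_cancel₀ hlc, C_1, one_mul]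
  have hfdvd : f ∣ p := dvd_trans ⟨Polynomial.C i.leadingCoeff, hfi2⟩ hdvd
  obtain ⟨q, hq⟩ := hfdvd
  have hqm : q.Monic := hfm.of_mul_monic_left (hq ▸ hm)
  have hfi : f.natDegree = i.natDegree := by
    rw [hf, natDegree_C_mul (inv_ne_zero hlc)]
  have h1 : 0 < i.natDegree := hi.natDegree_pos
  have h2 : i.natDegree ≤ 2 := hi.natDegree_le_two
  exact ⟨f, q, hfm, hqm, by omega, hq⟩

/-- A monic real polynomial of degree 7 splits as a monic degree-4 times a monic degree-3. -/
lemma exists_deg4_deg3_factorization (p : ℝ[X]) (hm : p.Monic) (hd : p.natDegree = 7) :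
    ∃ P Q : ℝ[X], P.Monic ∧ Q.Monic ∧ P.natDegree = 4 ∧ Q.natDegree = 3 ∧ p = P * Q := by
  obtain ⟨f1, q1, hf1m, hq1m, hf1d, h1⟩ := exists_small_monic_factor p hm (by omega)
  have hd1 : f1.natDegree + q1.natDegree = 7 := by
    rw [← hf1m.natDegree_mul hq1m, ← h1, hd]
  obtain ⟨f2, q2, hf2m, hq2m, hf2d, h2⟩ := exists_small_monic_factor q1 hq1m (by omega)
  have hd2 : f2.natDegree + q2.natDegree = q1.natDegree := by
    rw [← hf2m.natDegree_mul hq2m, ← h2]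
  have hff : (f1 * f2).natDegree = f1.natDegree + f2.natDegree := hf1m.natDegree_mul hf2m
  rcases (show f1.natDegree + f2.natDegree = 2 ∨ f1.natDegree + f2.natDegree = 3
      ∨ f1.natDegree + f2.natDegree = 4 by omega) with h | h | h
  · -- total 2 so far; take one more factor
    obtain ⟨f3, q3, hf3m, hq3m, hf3d, h3⟩ := exists_small_monic_factor q2 hq2m (by omega)
    have hd3 : f3.natDegree + q3.natDegree = q2.natDegree := by
      rw [← hf3m.natDegree_mul hq3m, ← h3]
    have hfff : (f1 * f2 * f3).natDegree = f1.natDegree + f2.natDegree + f3.natDegree := by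
      rw [(hf1m.mul hf2m).natDegree_mul hf3m, hff]
    rcases (show f3.natDegree = 1 ∨ f3.natDegree = 2 by omega) with h' | h'
    · exact ⟨q3, f1 * f2 * f3, hq3m, (hf1m.mul hf2m).mul hf3m, by omega, by omega,
        by rw [h1, h2, h3]; ring⟩
    · exact ⟨f1 * f2 * f3, q3, (hf1m.mul hf2m).mul hf3m, hq3m, by omega, by omega,
        by rw [h1, h2, h3]; ring⟩
  · exact ⟨q2, f1 * f2, hq2m, hf1m.mul hf2m, by omega, by omega, by rw [h1, h2]; ring⟩
  · exact ⟨f1 * f2, q2, hf1m.mul hf2m, hq2m, by omega, by omega, by rw [h1, h2]; ring⟩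

lemma monic_deg4_eq (p : ℝ[X]) (hm : p.Monic) (hd : p.natDegree = 4) :
    ∃ a b c d : ℝ, p = Polynomial.X ^ 4 + Polynomial.C a * Polynomial.X ^ 3 + Polynomial.C b * Polynomial.X ^ 2 + Polynomial.C c * Polynomial.X + Polynomial.C d := by
  refine ⟨p.coeff 3, p.coeff 2, p.coeff 1, p.coeff 0, ?_⟩
  have h5 : p.natDegree < 5 := by omega
  have := p.as_sum_range' 5 h5
  have hc4 : p.coeff 4 = 1 := by
    have := hm.coeff_natDegree
    rwa [hd] at this
  conv_lhs => rw [this]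
  simp only [Finset.sum_range_succ, Finset.sum_range_zero, zero_add,
    ← C_mul_X_pow_eq_monomial, hc4, C_1]
  ring

lemma monic_deg3_eq (p : ℝ[X]) (hm : p.Monic) (hd : p.natDegree = 3) :
    ∃ a b c : ℝ, p = Polynomial.X ^ 3 + Polynomial.C a * Polynomial.X ^ 2 + Polynomial.C b * Polynomial.X + Polynomial.C c := by
  refine ⟨p.coeff 2, p.coeff 1, p.coeff 0, ?_⟩
  have h4 : p.natDegree < 4 := by omega
  have := p.as_sum_range' 4 h4
  have hc3 : p.coeff 3 = 1 := by
    have := hm.coeff_natDegree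
    rwa [hd] at this
  conv_lhs => rw [this]
  simp only [Finset.sum_range_succ, Finset.sum_range_zero, zero_add,
    ← C_mul_X_pow_eq_monomial, hc3, C_1]
  ring

lemma separate_parts (C1 C2 N1 N2 : ℝ[X]) (h1 : N1.degree < 4) (h2 : N2.degree < 4)
    (h : Polynomial.X ^ 4 * C1 + N1 = Polynomial.X ^ 4 * C2 + N2) : C1 = C2 ∧ N1 = N2 := by
  by_cases hC : C1 = C2
  · refine ⟨hC, ?_⟩
    rw [hC] at h
    exact add_left_cancel h
  · exfalso
    have hsub : (Polynomial.X : ℝ[X]) ^ 4 * (C1 - C2) = N2 - N1 := by linear_combination h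
    have hne : C1 - C2 ≠ 0 := sub_ne_zero.mpr hC
    have hge : (4 : WithBot ℕ) ≤ ((Polynomial.X : ℝ[X]) ^ 4 * (C1 - C2)).degree := by
      rw [degree_mul, degree_X_pow]
      have : (0 : WithBot ℕ) ≤ (C1 - C2).degree := zero_le_degree_iff.mpr hne
      calc (4 : WithBot ℕ) = 4 + 0 := by simp
        _ ≤ 4 + (C1 - C2).degree := by exact add_le_add_right this 4
    have hlt : (N2 - N1).degree < 4 := lt_of_le_of_lt (degree_sub_le _ _) (max_lt h2 h1)
    rw [hsub] at hge
    exact absurd (lt_of_le_of_lt hge hlt) (lt_irrefl _)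

/-- ADRC recovers model-based observer performance (Theorem 2): the ADRC controller transfer
function can match the transfer function of the model-based extended observer controller. -/
theorem adrc_recovers_model_based_observer
    (a1 a2 a3 : ℝ) (b : ℝ) (hb : b ≠ 0)
    (k1' k2' k3' g1' g2' g3' g4' : ℝ) :
    ∃ k1 k2 k3 g1 g2 g3 g4 : ℝ,
      (RatFunc.C (g4 + g1 * k1 + g2 * k2 + g3 * k3) * (RatFunc.X : RatFunc ℝ) ^ 3
          + RatFunc.C (g2 * k1 + g3 * k2 + g4 * k3) * RatFunc.X ^ 2
          + RatFunc.C (g3 * k1 + g4 * k2) * RatFunc.X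
          + RatFunc.C (g4 * k1)) /
        (RatFunc.C b * RatFunc.X *
          (RatFunc.X ^ 3 + RatFunc.C (g1 + k3) * RatFunc.X ^ 2
            + RatFunc.C (g2 + k2 + g1 * k3) * RatFunc.X
            + RatFunc.C (g3 + k1 + g1 * k2 + g2 * k3))) =
      (RatFunc.C (g4' + g1' * k1' + g2' * k2' + g3' * k3') * RatFunc.X ^ 3
          + RatFunc.C (g2' * k1' + g3' * k2' + g4' * k3' - a3 * g4' - a3 * g1' * k1'
              - a3 * g2' * k2' + a1 * g1' * k3' + a2 * g2' * k3') * RatFunc.X ^ 2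
          + RatFunc.C (g3' * k1' + g4' * k2' + a1 * g1' * k2' - a2 * g1' * k1'
              + a1 * g2' * k3' - a3 * g2' * k1' - a2 * g4') * RatFunc.X
          + RatFunc.C (g4' * (k1' - a1))) /
        (RatFunc.C b * RatFunc.X *
          (RatFunc.X ^ 3 + RatFunc.C (g1' + k3' - a3) * RatFunc.X ^ 2
            + RatFunc.C (g2' + k2' + g1' * k3' - a3 * g1' - a2) * RatFunc.X
            + RatFunc.C (g3' + k1' + g1' * k2' + g2' * k3' - a2 * g1' - a3 * g2' - a1))) := by
  obtain ⟨P, Q, hPm, hQm, hPd, hQd, hfact⟩ := exists_deg4_deg3_factorization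
    (Polynomial.X ^ 7 + Polynomial.C (g1' + k3' - a3) * Polynomial.X ^ 6
      + Polynomial.C (g2' + k2' + g1' * k3' - a3 * g1' - a2) * Polynomial.X ^ 5
      + Polynomial.C (g3' + k1' + g1' * k2' + g2' * k3' - a2 * g1' - a3 * g2' - a1) * Polynomial.X ^ 4
      + Polynomial.C (g4' + g1' * k1' + g2' * k2' + g3' * k3') * Polynomial.X ^ 3
      + Polynomial.C (g2' * k1' + g3' * k2' + g4' * k3' - a3 * g4' - a3 * g1' * k1'
          - a3 * g2' * k2' + a1 * g1' * k3' + a2 * g2' * k3') * Polynomial.X ^ 2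
      + Polynomial.C (g3' * k1' + g4' * k2' + a1 * g1' * k2' - a2 * g1' * k1'
          + a1 * g2' * k3' - a3 * g2' * k1' - a2 * g4') * Polynomial.X
      + Polynomial.C (g4' * (k1' - a1)))
    (by monicity!) (by compute_degree!)
  obtain ⟨g1, g2, g3, g4, hP⟩ := monic_deg4_eq P hPm hPd
  obtain ⟨k3, k2, k1, hQ⟩ := monic_deg3_eq Q hQm hQd
  refine ⟨k1, k2, k3, g1, g2, g3, g4, ?_⟩
  have key : Polynomial.X ^ 4 * (Polynomial.X ^ 3 + Polynomial.C (g1 + k3) * Polynomial.X ^ 2 + Polynomial.C (g2 + k2 + g1 * k3) * Polynomial.X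
        + Polynomial.C (g3 + k1 + g1 * k2 + g2 * k3))
      + (Polynomial.C (g4 + g1 * k1 + g2 * k2 + g3 * k3) * Polynomial.X ^ 3
        + Polynomial.C (g2 * k1 + g3 * k2 + g4 * k3) * Polynomial.X ^ 2
        + Polynomial.C (g3 * k1 + g4 * k2) * Polynomial.X + Polynomial.C (g4 * k1)) =
      Polynomial.X ^ 4 * (Polynomial.X ^ 3 + Polynomial.C (g1' + k3' - a3) * Polynomial.X ^ 2
        + Polynomial.C (g2' + k2' + g1' * k3' - a3 * g1' - a2) * Polynomial.X
        + Polynomial.C (g3' + k1' + g1' * k2' + g2' * k3' - a2 * g1' - a3 * g2' - a1))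
      + (Polynomial.C (g4' + g1' * k1' + g2' * k2' + g3' * k3') * Polynomial.X ^ 3
        + Polynomial.C (g2' * k1' + g3' * k2' + g4' * k3' - a3 * g4' - a3 * g1' * k1'
            - a3 * g2' * k2' + a1 * g1' * k3' + a2 * g2' * k3') * Polynomial.X ^ 2
        + Polynomial.C (g3' * k1' + g4' * k2' + a1 * g1' * k2' - a2 * g1' * k1'
            + a1 * g2' * k3' - a3 * g2' * k1' - a2 * g4') * Polynomial.X
        + Polynomial.C (g4' * (k1' - a1))) := by
    have e1 : Polynomial.X ^ 4 * (Polynomial.X ^ 3 + Polynomial.C (g1 + k3) * Polynomial.X ^ 2 + Polynomial.C (g2 + k2 + g1 * k3) * Polynomial.X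
          + Polynomial.C (g3 + k1 + g1 * k2 + g2 * k3))
        + (Polynomial.C (g4 + g1 * k1 + g2 * k2 + g3 * k3) * Polynomial.X ^ 3
          + Polynomial.C (g2 * k1 + g3 * k2 + g4 * k3) * Polynomial.X ^ 2
          + Polynomial.C (g3 * k1 + g4 * k2) * Polynomial.X + Polynomial.C (g4 * k1)) = P * Q := by
      rw [hP, hQ]
      simp only [C_add, C_mul]
      ring
    rw [e1, ← hfact]
    ring
  obtain ⟨hC3, hN3⟩ := separate_parts _ _ _ _
    (by
      have h3 : (Polynomial.C (g4 + g1 * k1 + g2 * k2 + g3 * k3) * Polynomial.X ^ 3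
        + Polynomial.C (g2 * k1 + g3 * k2 + g4 * k3) * Polynomial.X ^ 2
        + Polynomial.C (g3 * k1 + g4 * k2) * Polynomial.X + Polynomial.C (g4 * k1) : ℝ[X]).degree ≤ 3 := by compute_degree
      exact lt_of_le_of_lt h3 (by decide))
    (by
      have h3 : (Polynomial.C (g4' + g1' * k1' + g2' * k2' + g3' * k3') * Polynomial.X ^ 3
        + Polynomial.C (g2' * k1' + g3' * k2' + g4' * k3' - a3 * g4' - a3 * g1' * k1'
            - a3 * g2' * k2' + a1 * g1' * k3' + a2 * g2' * k3') * Polynomial.X ^ 2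
        + Polynomial.C (g3' * k1' + g4' * k2' + a1 * g1' * k2' - a2 * g1' * k1'
            + a1 * g2' * k3' - a3 * g2' * k1' - a2 * g4') * Polynomial.X
        + Polynomial.C (g4' * (k1' - a1)) : ℝ[X]).degree ≤ 3 := by compute_degree
      exact lt_of_le_of_lt h3 (by decide))
    key
  have HC := congrArg (algebraMap ℝ[X] (RatFunc ℝ)) hC3
  have HN := congrArg (algebraMap ℝ[X] (RatFunc ℝ)) hN3
  simp only [map_add, map_mul, map_sub, map_pow, RatFunc.algebraMap_C,
    RatFunc.algebraMap_X] at HC HN ⊢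
  rw [HN, HC]
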